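/- Let C and D be closed model categories and (S, U): C → D a Quillen equivalence. If X is a cofibrant object of C, then the induced Quillen adjunction (S̄, Ū): (X↓C) → (S(X)↓D) between the coslice categories is a Quillen equivalence. -/

import Mathlib

open CategoryTheory CategoryTheory.Limits

universe v u v' u'

/-- `f` is a retract of `g` in the arrow category. -/
def IsRetractOfArrow {C : Type u} [Category.{v} C] {A B A' B' : C}
    (f : A ⟶ B) (g : A' ⟶ B') : Prop :=
  ∃ (i : Arrow.mk f ⟶ Arrow.mk g) (r : Arrow.mk g ⟶ Arrow.mk f), i ≫ r = 𝟙 (Arrow.mk f)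

/-- A (closed) model structure on a category `C`, in the sense of Quillen: three classes of
morphisms (cofibrations, fibrations, weak equivalences) satisfying the two-out-of-three
axiom, closure under retracts, the lifting axioms and the factorization axioms. -/
structure ModelStruct (C : Type u) [Category.{v} C] : Type (max u v) where
  cof : MorphismProperty C
  fib : MorphismProperty C
  weq : MorphismProperty C
  weq_comp : ∀ {X Y Z : C} (f : X ⟶ Y) (g : Y ⟶ Z), weq f → weq g → weq (f ≫ g)
  weq_cancel_left : ∀ {X Y Z : C} (f : X ⟶ Y) (g : Y ⟶ Z), weq f → weq (f ≫ g) → weq g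
  weq_cancel_right : ∀ {X Y Z : C} (f : X ⟶ Y) (g : Y ⟶ Z), weq g → weq (f ≫ g) → weq f
  cof_retract : ∀ {A B A' B' : C} {f : A ⟶ B} {g : A' ⟶ B'},
    IsRetractOfArrow f g → cof g → cof f
  fib_retract : ∀ {A B A' B' : C} {f : A ⟶ B} {g : A' ⟶ B'},
    IsRetractOfArrow f g → fib g → fib f
  weq_retract : ∀ {A B A' B' : C} {f : A ⟶ B} {g : A' ⟶ B'},
    IsRetractOfArrow f g → weq g → weq f
  lifting_cof_trivFib : ∀ {A B X Y : C} (i : A ⟶ B) (p : X ⟶ Y),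
    cof i → fib p → weq p → HasLiftingProperty i p
  lifting_trivCof_fib : ∀ {A B X Y : C} (i : A ⟶ B) (p : X ⟶ Y),
    cof i → weq i → fib p → HasLiftingProperty i p
  factor_cof_trivFib : ∀ {X Y : C} (f : X ⟶ Y),
    ∃ (Z : C) (i : X ⟶ Z) (p : Z ⟶ Y), cof i ∧ fib p ∧ weq p ∧ i ≫ p = f
  factor_trivCof_fib : ∀ {X Y : C} (f : X ⟶ Y),
    ∃ (Z : C) (i : X ⟶ Z) (p : Z ⟶ Y), cof i ∧ weq i ∧ fib p ∧ i ≫ p = f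

variable {C : Type u} [Category.{v} C]

/-- An object is cofibrant if the unique map from the initial object to it is a cofibration. -/
def ModelStruct.Cofibrant [HasInitial C] (M : ModelStruct C) (A : C) : Prop :=
  M.cof (initial.to A)

/-- An object is fibrant if the unique map from it to the terminal object is a fibration. -/
def ModelStruct.Fibrant [HasTerminal C] (M : ModelStruct C) (A : C) : Prop :=
  M.fib (terminal.from A)

/-- The induced model structure on the coslice category `(X ↓ C)`: a morphism is a
cofibration, fibration or weak equivalence iff its underlying morphism in `C` is one. -/
def ModelStruct.under (M : ModelStruct C) (X : C) : ModelStruct (Under X) where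
  cof _ _ f := M.cof f.right
  fib _ _ f := M.fib f.right
  weq _ _ f := M.weq f.right
  weq_comp f g hf hg := by simpa using M.weq_comp f.right g.right hf hg
  weq_cancel_left f g hf hfg := M.weq_cancel_left f.right g.right hf (by simpa using hfg)
  weq_cancel_right f g hg hfg := M.weq_cancel_right f.right g.right hg (by simpa using hfg)
  cof_retract := fun ⟨i, r, hir⟩ hg => M.cof_retract
    ⟨(Under.forget X).mapArrow.map i, (Under.forget X).mapArrow.map r,
      ((Under.forget X).mapArrow.map_comp i r).symm.trans
        (by rw [hir, CategoryTheory.Functor.map_id]; rfl)⟩ hg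
  fib_retract := fun ⟨i, r, hir⟩ hg => M.fib_retract
    ⟨(Under.forget X).mapArrow.map i, (Under.forget X).mapArrow.map r,
      ((Under.forget X).mapArrow.map_comp i r).symm.trans
        (by rw [hir, CategoryTheory.Functor.map_id]; rfl)⟩ hg
  weq_retract := fun ⟨i, r, hir⟩ hg => M.weq_retract
    ⟨(Under.forget X).mapArrow.map i, (Under.forget X).mapArrow.map r,
      ((Under.forget X).mapArrow.map_comp i r).symm.trans
        (by rw [hir, CategoryTheory.Functor.map_id]; rfl)⟩ hg
  lifting_cof_trivFib i p hi hp hp' := by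
    constructor
    intro f g sq
    haveI := M.lifting_cof_trivFib i.right p.right hi hp hp'
    have sq' : CommSq f.right i.right p.right g.right :=
      ⟨by rw [← Under.comp_right, sq.w, Under.comp_right]⟩
    exact ⟨⟨⟨Under.homMk sq'.lift (by
        rw [← Under.w i, Category.assoc, sq'.fac_left, Under.w f]),
      by ext; exact sq'.fac_left, by ext; exact sq'.fac_right⟩⟩⟩
  lifting_trivCof_fib i p hi hi' hp := by
    constructor
    intro f g sq
    haveI := M.lifting_trivCof_fib i.right p.right hi hi' hp
    have sq' : CommSq f.right i.right p.right g.right :=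
      ⟨by rw [← Under.comp_right, sq.w, Under.comp_right]⟩
    exact ⟨⟨⟨Under.homMk sq'.lift (by
        rw [← Under.w i, Category.assoc, sq'.fac_left, Under.w f]),
      by ext; exact sq'.fac_left, by ext; exact sq'.fac_right⟩⟩⟩
  factor_cof_trivFib {A B} f := by
    obtain ⟨Z, i, p, hi, hp, hp', hfac⟩ := M.factor_cof_trivFib f.right
    exact ⟨Under.mk (A.hom ≫ i), Under.homMk i rfl,
      Under.homMk p (by show (A.hom ≫ i) ≫ p = B.hom; rw [Category.assoc, hfac, Under.w f]),
      hi, hp, hp', by ext; exact hfac⟩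
  factor_trivCof_fib {A B} f := by
    obtain ⟨Z, i, p, hi, hi', hp, hfac⟩ := M.factor_trivCof_fib f.right
    exact ⟨Under.mk (A.hom ≫ i), Under.homMk i rfl,
      Under.homMk p (by show (A.hom ≫ i) ≫ p = B.hom; rw [Category.assoc, hfac, Under.w f]),
      hi, hi', hp, by ext; exact hfac⟩

/-- The induced model structure on the slice category `(C ↓ X)`: a morphism is a
cofibration, fibration or weak equivalence iff its underlying morphism in `C` is one. -/
def ModelStruct.over (M : ModelStruct C) (X : C) : ModelStruct (Over X) where
  cof _ _ f := M.cof f.left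
  fib _ _ f := M.fib f.left
  weq _ _ f := M.weq f.left
  weq_comp f g hf hg := by simpa using M.weq_comp f.left g.left hf hg
  weq_cancel_left f g hf hfg := M.weq_cancel_left f.left g.left hf (by simpa using hfg)
  weq_cancel_right f g hg hfg := M.weq_cancel_right f.left g.left hg (by simpa using hfg)
  cof_retract := fun ⟨i, r, hir⟩ hg => M.cof_retract
    ⟨(Over.forget X).mapArrow.map i, (Over.forget X).mapArrow.map r,
      ((Over.forget X).mapArrow.map_comp i r).symm.trans
        (by rw [hir, CategoryTheory.Functor.map_id]; rfl)⟩ hg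
  fib_retract := fun ⟨i, r, hir⟩ hg => M.fib_retract
    ⟨(Over.forget X).mapArrow.map i, (Over.forget X).mapArrow.map r,
      ((Over.forget X).mapArrow.map_comp i r).symm.trans
        (by rw [hir, CategoryTheory.Functor.map_id]; rfl)⟩ hg
  weq_retract := fun ⟨i, r, hir⟩ hg => M.weq_retract
    ⟨(Over.forget X).mapArrow.map i, (Over.forget X).mapArrow.map r,
      ((Over.forget X).mapArrow.map_comp i r).symm.trans
        (by rw [hir, CategoryTheory.Functor.map_id]; rfl)⟩ hg
  lifting_cof_trivFib i p hi hp hp' := by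
    constructor
    intro f g sq
    haveI := M.lifting_cof_trivFib i.left p.left hi hp hp'
    have sq' : CommSq f.left i.left p.left g.left :=
      ⟨by rw [← Over.comp_left, sq.w, Over.comp_left]⟩
    exact ⟨⟨⟨Over.homMk sq'.lift (by
        rw [← Over.w p, ← Category.assoc, sq'.fac_right, Over.w g]),
      by ext; exact sq'.fac_left, by ext; exact sq'.fac_right⟩⟩⟩
  lifting_trivCof_fib i p hi hi' hp := by
    constructor
    intro f g sq
    haveI := M.lifting_trivCof_fib i.left p.left hi hi' hp
    have sq' : CommSq f.left i.left p.left g.left :=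
      ⟨by rw [← Over.comp_left, sq.w, Over.comp_left]⟩
    exact ⟨⟨⟨Over.homMk sq'.lift (by
        rw [← Over.w p, ← Category.assoc, sq'.fac_right, Over.w g]),
      by ext; exact sq'.fac_left, by ext; exact sq'.fac_right⟩⟩⟩
  factor_cof_trivFib {A B} f := by
    obtain ⟨Z, i, p, hi, hp, hp', hfac⟩ := M.factor_cof_trivFib f.left
    exact ⟨Over.mk (p ≫ B.hom), Over.homMk i (by show i ≫ (p ≫ B.hom) = A.hom; rw [← Category.assoc, hfac, Over.w f]),
      Over.homMk p rfl, hi, hp, hp', by ext; exact hfac⟩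
  factor_trivCof_fib {A B} f := by
    obtain ⟨Z, i, p, hi, hi', hp, hfac⟩ := M.factor_trivCof_fib f.left
    exact ⟨Over.mk (p ≫ B.hom), Over.homMk i (by show i ≫ (p ≫ B.hom) = A.hom; rw [← Category.assoc, hfac, Over.w f]),
      Over.homMk p rfl, hi, hi', hp, by ext; exact hfac⟩

noncomputable instance (X : C) : HasInitial (Under X) :=
  Under.mkIdInitial.hasInitial

noncomputable instance (X : C) : HasTerminal (Over X) :=
  Over.mkIdTerminal.hasTerminal

/-- The terminal object of `(X ↓ C)` is `X ⟶ *`. -/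
noncomputable def underMkTerminal [HasTerminal C] (X : C) :
    IsTerminal (Under.mk (terminal.from X)) :=
  IsTerminal.ofUniqueHom (fun u => Under.homMk (terminal.from u.right)
      (terminal.hom_ext _ _))
    (fun u m => by ext; exact terminal.hom_ext _ _)

noncomputable instance [HasTerminal C] (X : C) : HasTerminal (Under X) :=
  (underMkTerminal X).hasTerminal

/-- The initial object of `(C ↓ X)` is `∅ ⟶ X`. -/
noncomputable def overMkInitial [HasInitial C] (X : C) :
    IsInitial (Over.mk (initial.to X)) :=
  IsInitial.ofUniqueHom (fun u => Over.homMk (initial.to u.left)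
      (initial.hom_ext _ _))
    (fun u m => by ext; exact initial.hom_ext _ _)

noncomputable instance [HasInitial C] (X : C) : HasInitial (Over X) :=
  (overMkInitial X).hasInitial

/-- A Quillen adjunction between model categories: an adjoint pair whose left adjoint
preserves cofibrations and acyclic cofibrations. -/
structure QuillenAdjunction {C : Type u} [Category.{v} C] {D : Type u'} [Category.{v'} D]
    (M : ModelStruct C) (N : ModelStruct D) (F : C ⥤ D) (G : D ⥤ C) where
  adj : F ⊣ G
  map_cof : ∀ {A B : C} (f : A ⟶ B), M.cof f → N.cof (F.map f)
  map_trivCof_weq : ∀ {A B : C} (f : A ⟶ B), M.cof f → M.weq f → N.weq (F.map f)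

/-- A Quillen adjunction is a Quillen equivalence if for every cofibrant `A` and fibrant `B`,
a map `F A ⟶ B` is a weak equivalence iff its adjunct `A ⟶ G B` is. -/
def IsQuillenEquivalence {C : Type u} [Category.{v} C] {D : Type u'} [Category.{v'} D]
    [HasInitial C] [HasTerminal D]
    (M : ModelStruct C) (N : ModelStruct D) {F : C ⥤ D} {G : D ⥤ C} (adj : F ⊣ G) : Prop :=
  ∀ (A : C) (B : D), M.Cofibrant A → N.Fibrant B →
    ∀ f : F.obj A ⟶ B, N.weq f ↔ M.weq ((adj.homEquiv A B) f)


namespace ModelStruct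

variable {M : ModelStruct C}

lemma cof_id (M : ModelStruct C) (A : C) : M.cof (𝟙 A) := by
  obtain ⟨Z, i, p, hi, _, _, hfac⟩ := M.factor_cof_trivFib (𝟙 A)
  refine M.cof_retract ⟨Arrow.homMk' (u := 𝟙 A) (v := i) (by simp),
    Arrow.homMk' (u := 𝟙 A) (v := p) (by simp [hfac]), ?_⟩ hi
  ext <;> simp [hfac]

lemma fib_id (M : ModelStruct C) (A : C) : M.fib (𝟙 A) := by
  obtain ⟨Z, i, p, _, _, hp, hfac⟩ := M.factor_trivCof_fib (𝟙 A)
  refine M.fib_retract ⟨Arrow.homMk' (u := i) (v := 𝟙 A) (by simp [hfac]),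
    Arrow.homMk' (u := p) (v := 𝟙 A) (by simp), ?_⟩ hp
  ext <;> simp [hfac]

lemma weq_id (M : ModelStruct C) (A : C) : M.weq (𝟙 A) := by
  obtain ⟨Z, i, p, _, hi, _, hfac⟩ := M.factor_trivCof_fib (𝟙 A)
  have hpi : M.weq (p ≫ i) := by
    refine M.weq_cancel_left i (p ≫ i) hi ?_
    rw [← Category.assoc, hfac, Category.id_comp]; exact hi
  have hp : M.weq p := M.weq_cancel_right p i hi hpi
  rw [← hfac]; exact M.weq_comp i p hi hp

lemma retract_id_of_iso {A B : C} (f : A ⟶ B) [IsIso f] :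
    IsRetractOfArrow f (𝟙 A) := by
  refine ⟨Arrow.homMk' (u := 𝟙 A) (v := inv f) (by simp),
    Arrow.homMk' (u := 𝟙 A) (v := f) (by simp), ?_⟩
  ext <;> simp

lemma cof_of_iso (M : ModelStruct C) {A B : C} (f : A ⟶ B) [IsIso f] : M.cof f :=
  M.cof_retract (retract_id_of_iso f) (M.cof_id A)

lemma fib_of_iso (M : ModelStruct C) {A B : C} (f : A ⟶ B) [IsIso f] : M.fib f :=
  M.fib_retract (retract_id_of_iso f) (M.fib_id A)

lemma cof_comp (M : ModelStruct C) {A B Z : C} (f : A ⟶ B) (g : B ⟶ Z)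
    (hf : M.cof f) (hg : M.cof g) : M.cof (f ≫ g) := by
  obtain ⟨W, i, p, hi, hp, hp', hfac⟩ := M.factor_cof_trivFib (f ≫ g)
  haveI := M.lifting_cof_trivFib f p hf hp hp'
  haveI := M.lifting_cof_trivFib g p hg hp hp'
  haveI : HasLiftingProperty (f ≫ g) p := inferInstance
  have sq : CommSq i (f ≫ g) p (𝟙 Z) := ⟨by simp [hfac]⟩
  refine M.cof_retract ⟨Arrow.homMk' (u := 𝟙 A) (v := sq.lift) (by simp [sq.fac_left]),
    Arrow.homMk' (u := 𝟙 A) (v := p) (by simp [hfac]), ?_⟩ hi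
  ext <;> simp [sq.fac_right]

lemma fib_comp (M : ModelStruct C) {A B Z : C} (f : A ⟶ B) (g : B ⟶ Z)
    (hf : M.fib f) (hg : M.fib g) : M.fib (f ≫ g) := by
  obtain ⟨W, i, p, hi, hi', hp, hfac⟩ := M.factor_trivCof_fib (f ≫ g)
  haveI := M.lifting_trivCof_fib i f hi hi' hf
  haveI := M.lifting_trivCof_fib i g hi hi' hg
  haveI : HasLiftingProperty i (f ≫ g) := inferInstance
  have sq : CommSq (𝟙 A) i (f ≫ g) p := ⟨by simp [hfac]⟩
  refine M.fib_retract ⟨Arrow.homMk' (u := i) (v := 𝟙 Z) (by simp [hfac]),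
    Arrow.homMk' (u := sq.lift) (v := 𝟙 Z) (by simp [sq.fac_right]), ?_⟩ hp
  ext <;> simp [sq.fac_left]

end ModelStruct

/-- The coslice adjunction induced by an adjunction `S ⊣ U` and an object `X`. -/
def cosliceAdjunction {D : Type u'} [Category.{v'} D] {S : C ⥤ D} {U : D ⥤ C}
    (adj : S ⊣ U) (X : C) :
    Under.post S ⊣ Under.post (X := S.obj X) U ⋙ Under.map (adj.unit.app X) :=
  Adjunction.mkOfHomEquiv
    { homEquiv := fun A B =>
        { toFun := fun g => Under.homMk (adj.homEquiv A.right B.right g.right)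
            (by
              have := Under.w g
              dsimp at this ⊢
              have h2 : A.hom ≫ adj.unit.app A.right
                  = adj.unit.app X ≫ U.map (S.map A.hom) :=
                (adj.unit_naturality A.hom).symm
              erw [Adjunction.homEquiv_unit, ← Category.assoc, h2, Category.assoc,
                ← U.map_comp, this]; rfl)
          invFun := fun h => Under.homMk ((adj.homEquiv A.right B.right).symm h.right)
            (by
              have := Under.w h
              dsimp at this ⊢
              erw [Adjunction.homEquiv_counit, ← S.map_comp_assoc, this, S.map_comp,
                Category.assoc, adj.counit_naturality, adj.left_triangle_components_assoc])
          left_inv := fun g => by ext; exact (adj.homEquiv _ _).symm_apply_apply _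
          right_inv := fun h => by ext; exact (adj.homEquiv _ _).apply_symm_apply _ }
      homEquiv_naturality_left_symm := fun f g => by
        ext; exact adj.homEquiv_naturality_left_symm f.right g.right
      homEquiv_naturality_right := fun f g => by
        ext; exact adj.homEquiv_naturality_right f.right g.right }

/-- **Statement 11.** If `(S, U) : C → D` is a Quillen equivalence and `X` is a cofibrant object
of `C`, then the induced Quillen adjunction `(S̄, Ū) : (X ↓ C) → (S X ↓ D)` between the coslice
categories is a Quillen equivalence. -/
theorem coslice_induced_quillen_equivalence {C : Type u} [Category.{v} C]
    {D : Type u'} [Category.{v'} D]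
    [HasLimits C] [HasColimits C] [HasLimits D] [HasColimits D]
    (M : ModelStruct C) (N : ModelStruct D) {S : C ⥤ D} {U : D ⥤ C}
    (Q : QuillenAdjunction M N S U) (hQ : IsQuillenEquivalence M N Q.adj)
    (X : C) (hX : M.Cofibrant X) :
    ∃ QA : QuillenAdjunction (M.under X) (N.under (S.obj X))
        (Under.post S) (Under.post U ⋙ Under.map (Q.adj.unit.app X)),
      IsQuillenEquivalence (M.under X) (N.under (S.obj X)) QA.adj := by
  refine ⟨{ adj := cosliceAdjunction Q.adj X
            map_cof := fun f hf => Q.map_cof f.right hf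
            map_trivCof_weq := fun f hf hf' => Q.map_trivCof_weq f.right hf hf' }, ?_⟩
  intro A B hA hB f
  -- `A.right` is cofibrant in `C`
  have hAr : M.Cofibrant A.right := by
    have e : (⊥_ Under X) ≅ Under.mk (𝟙 X) :=
      initialIsInitial.uniqueUpToIso Under.mkIdInitial
    have hAhom : M.cof A.hom := by
      have : A.hom = e.inv.right ≫ (initial.to A).right := by
        have := Under.w (e.inv ≫ initial.to A)
        simpa using this.symm
      rw [this]
      exact M.cof_comp _ _ (M.cof_of_iso ((Under.forget X).mapIso e.symm).hom) hA
    have : initial.to A.right = initial.to X ≫ A.hom := initial.hom_ext _ _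
    rw [ModelStruct.Cofibrant, this]
    exact M.cof_comp _ _ hX hAhom
  -- `B.right` is fibrant in `D`
  have hBr : N.Fibrant B.right := by
    have e : (⊤_ Under (S.obj X)) ≅ Under.mk (terminal.from (S.obj X)) :=
      terminalIsTerminal.uniqueUpToIso (underMkTerminal (S.obj X))
    have : terminal.from B.right = (terminal.from B).right ≫ e.hom.right :=
      terminal.hom_ext _ _
    rw [ModelStruct.Fibrant, this]
    exact N.fib_comp _ _ hB (N.fib_of_iso ((Under.forget (S.obj X)).mapIso e).hom)
  have key := hQ A.right B.right hAr hBr f.right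
  have hrw : (((cosliceAdjunction Q.adj X).homEquiv A B) f).right
      = (Q.adj.homEquiv A.right B.right) f.right := by
    simp [cosliceAdjunction]; rfl
  constructor
  · intro h
    show M.weq _
    rw [hrw]
    exact key.mp h
  · intro h
    show N.weq f.right
    rw [show (M.under X).weq (((cosliceAdjunction Q.adj X).homEquiv A B) f)
        = M.weq (((cosliceAdjunction Q.adj X).homEquiv A B) f).right from rfl, hrw] at h
    exact key.mpr h
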